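/- Let λ ∈ (0,1), β > 0, and R₀ ∈ ℝ^{n×n} positive definite. For each k, let φ̄ₖ ∈ ℝ^{q_k×n} have full row rank and satisfy φ̄ₖᵀ φ̄ₖ ⪯ β Iₙ, and define R_{k+1} = Rₖ − (1−λ) Rₖ φ̄ₖᵀ (φ̄ₖ Rₖ φ̄ₖᵀ)⁻¹ φ̄ₖ Rₖ + φ̄ₖᵀ φ̄ₖ. Then for all k ≥ 0, λ_max(Rₖ) ≤ max{β/(1−λ), λ_max(R₀)}. -/

import Mathlib

open Matrix

section AuxSift
private lemma psd_smul {n : ℕ} {A : Matrix (Fin n) (Fin n) ℝ} (hA : A.PosSemidef)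
    {c : ℝ} (hc : 0 ≤ c) : (c • A).PosSemidef := by
  refine Matrix.posSemidef_iff_dotProduct_mulVec.mpr ⟨?_, fun x => ?_⟩
  · have : (c • A)ᴴ = c • Aᴴ := by simp [conjTranspose_smul]
    rw [Matrix.IsHermitian, this, hA.1]
  · rw [smul_mulVec, dotProduct_smul, smul_eq_mul]
    exact mul_nonneg hc (hA.dotProduct_mulVec_nonneg x)

private lemma pd_smul {n : ℕ} {A : Matrix (Fin n) (Fin n) ℝ} (hA : A.PosDef)
    {c : ℝ} (hc : 0 < c) : (c • A).PosDef := by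
  refine Matrix.PosDef.of_dotProduct_mulVec_pos (psd_smul hA.posSemidef hc.le).1 fun x hx => ?_
  rw [smul_mulVec, dotProduct_smul, smul_eq_mul]
  exact mul_pos hc (hA.dotProduct_mulVec_pos hx)

private lemma psd_conj {m k : ℕ} {A : Matrix (Fin m) (Fin m) ℝ} (hA : A.PosSemidef)
    (B : Matrix (Fin k) (Fin m) ℝ) : (B * A * Bᵀ).PosSemidef := by
  have h := hA.mul_mul_conjTranspose_same B
  rwa [conjTranspose_eq_transpose_of_trivial] at h

private lemma pd_conj {q n : ℕ} {A : Matrix (Fin n) (Fin n) ℝ} (hA : A.PosDef)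
    (Φ : Matrix (Fin q) (Fin n) ℝ) (hinj : Function.Injective Φ.vecMul) :
    (Φ * A * Φᵀ).PosDef := by
  refine Matrix.PosDef.of_dotProduct_mulVec_pos (psd_conj hA.posSemidef Φ).1 fun x hx => ?_
  have hy : Φ.vecMul x ≠ 0 := by
    intro h0
    exact hx (hinj (by simpa using h0))
  have key : x ⬝ᵥ ((Φ * A * Φᵀ) *ᵥ x) = (Φ.vecMul x) ⬝ᵥ (A *ᵥ (Φ.vecMul x)) := by
    rw [← mulVec_mulVec, ← mulVec_mulVec, dotProduct_mulVec, mulVec_transpose]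
  have h2 := hA.dotProduct_mulVec_pos hy
  simp only [star_trivial] at h2 ⊢
  rw [key]; exact h2

private lemma inj_of_rank {q n : ℕ} {Φ : Matrix (Fin q) (Fin n) ℝ} (h : Φ.rank = q) :
    Function.Injective Φ.vecMul := by
  rw [Matrix.vecMul_injective_iff]
  apply linearIndependent_iff_card_eq_finrank_span.mpr
  rw [Set.finrank, ← Matrix.rank_eq_finrank_span_row, h, Fintype.card_fin]

private lemma herm_to_sym {n : ℕ} {A : Matrix (Fin n) (Fin n) ℝ} (h : A.IsHermitian) :
    Aᵀ = A := by
  rw [← conjTranspose_eq_transpose_of_trivial]; exact h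
end AuxSift

/-- SIFt-RLS upper covariance bound: if every filtered regressor `φ̄ₖ ∈ ℝ^{q_k×n}` has full
row rank and satisfies `φ̄ₖᵀ φ̄ₖ ⪯ β Iₙ`, then `λ_max(Rₖ) ≤ max {β/(1−λ), λ_max(R₀)}`,
expressed in the Loewner order: for every `b` with `R₀ ⪯ b Iₙ` we have
`Rₖ ⪯ max (β/(1−λ)) b • Iₙ`. -/
theorem sift_rls_information_upper_bound
    {n : ℕ} (lam : ℝ) (hlam : lam ∈ Set.Ioo (0:ℝ) 1)
    (β : ℝ) (hβ : 0 < β)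
    (q : ℕ → ℕ) (φ : (k : ℕ) → Matrix (Fin (q k)) (Fin n) ℝ)
    (hrank : ∀ k, (φ k).rank = q k)
    (hbdd : ∀ k, (β • (1 : Matrix (Fin n) (Fin n) ℝ) - (φ k)ᵀ * φ k).PosSemidef)
    (R : ℕ → Matrix (Fin n) (Fin n) ℝ) (hR0 : (R 0).PosDef)
    (hrec : ∀ k, R (k + 1) =
      R k - (1 - lam) • (R k * (φ k)ᵀ * (φ k * R k * (φ k)ᵀ)⁻¹ * φ k * R k)
        + (φ k)ᵀ * φ k) :
    ∀ b : ℝ, (b • (1 : Matrix (Fin n) (Fin n) ℝ) - R 0).PosSemidef →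
      ∀ k, (max (β / (1 - lam)) b • (1 : Matrix (Fin n) (Fin n) ℝ) - R k).PosSemidef := by
  obtain ⟨hl0, hl1⟩ := hlam
  have hμ : 0 < 1 - lam := by linarith
  intro b hb
  set c : ℝ := max (β / (1 - lam)) b with hcdef
  have hcβ : β ≤ (1 - lam) * c := by
    have h1 : β / (1 - lam) ≤ c := le_max_left _ _
    calc β = (1 - lam) * (β / (1 - lam)) := by field_simp
    _ ≤ (1 - lam) * c := by nlinarith
  suffices h : ∀ k, (R k).PosDef ∧
      (c • (1 : Matrix (Fin n) (Fin n) ℝ) - R k).PosSemidef by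
    exact fun k => (h k).2
  intro k
  induction k with
  | zero =>
    refine ⟨hR0, ?_⟩
    have heq : c • (1 : Matrix (Fin n) (Fin n) ℝ) - R 0
        = (c - b) • (1 : Matrix (Fin n) (Fin n) ℝ) + (b • 1 - R 0) := by
      rw [sub_smul]; abel
    rw [heq]
    exact (psd_smul Matrix.PosSemidef.one (by simp [hcdef] : (0:ℝ) ≤ c - b)).add hb
  | succ k ih =>
    obtain ⟨hPD, hPSD⟩ := ih
    set Φ := φ k with hΦdef
    set Rk := R k with hRkdef
    have hinj : Function.Injective Φ.vecMul := inj_of_rank (hrank k)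
    set S := Φ * Rk * Φᵀ with hSdef
    have hSpd : S.PosDef := pd_conj hPD Φ hinj
    have hSunit : IsUnit S.det := hSpd.det_pos.ne'.isUnit
    have hSSi : S * S⁻¹ = 1 := Matrix.mul_nonsing_inv S hSunit
    set G := Φ * Φᵀ with hGdef
    have hGpd : G.PosDef := by
      have := pd_conj Matrix.PosDef.one Φ hinj
      rwa [Matrix.mul_one] at this
    have hGunit : IsUnit G.det := hGpd.det_pos.ne'.isUnit
    have hGiG : G⁻¹ * G = 1 := Matrix.nonsing_inv_mul G hGunit
    -- transposes
    have hRT : Rkᵀ = Rk := herm_to_sym hPD.1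
    have hST : Sᵀ = S := herm_to_sym hSpd.1
    have hSiT : (S⁻¹)ᵀ = S⁻¹ := by rw [Matrix.transpose_nonsing_inv, hST]
    have hGT : Gᵀ = G := herm_to_sym hGpd.1
    have hGiT : (G⁻¹)ᵀ = G⁻¹ := by rw [Matrix.transpose_nonsing_inv, hGT]
    set J := Φᵀ * S⁻¹ * Φ with hJdef
    have hJT : Jᵀ = J := by
      rw [hJdef, Matrix.transpose_mul, Matrix.transpose_mul, Matrix.transpose_transpose,
        hSiT, Matrix.mul_assoc]
    set N := Rk - Rk * J * Rk with hNdef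
    set Q := Φᵀ * G⁻¹ * Φ with hQdef
    have hQT : Qᵀ = Q := by
      rw [hQdef, Matrix.transpose_mul, Matrix.transpose_mul, Matrix.transpose_transpose,
        hGiT, Matrix.mul_assoc]
    have hQφt : Q * Φᵀ = Φᵀ := by
      have h1 : Q * Φᵀ = Φᵀ * (G⁻¹ * G) := by
        rw [hQdef, hGdef]; simp only [Matrix.mul_assoc]
      rw [h1, hGiG, Matrix.mul_one]
    have hφQ : Φ * Q = Φ := by
      have := congrArg Matrix.transpose hQφt
      rwa [Matrix.transpose_mul, hQT, Matrix.transpose_transpose] at this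
    have hQQ : Q * Q = Q := by
      nth_rewrite 1 [hQdef]
      rw [Matrix.mul_assoc (Φᵀ * G⁻¹) Φ Q, hφQ, ← hQdef]
    -- J R J = J
    have hJRJ : J * Rk * J = J := by
      have h1 : J * Rk * J = Φᵀ * (S⁻¹ * (S * (S⁻¹ * Φ))) := by
        rw [hJdef, hSdef]; simp only [Matrix.mul_assoc]
      rw [h1, ← Matrix.mul_assoc S S⁻¹ Φ, hSSi, Matrix.one_mul, hJdef, Matrix.mul_assoc]
    -- N is PSD
    have hNpsd : N.PosSemidef := by
      have hfact : (1 - Rk * J) * Rk * (1 - Rk * J)ᵀ = N := by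
        have hT : (1 - Rk * J)ᵀ = 1 - J * Rk := by
          rw [Matrix.transpose_sub, Matrix.transpose_one, Matrix.transpose_mul, hJT, hRT]
        rw [hT, hNdef]
        have expand : (1 - Rk * J) * Rk * (1 - J * Rk)
            = Rk - Rk * J * Rk - Rk * J * Rk + Rk * (J * Rk * J) * Rk := by
          noncomm_ring
        rw [expand, hJRJ]
        abel
      rw [← hfact]
      exact psd_conj hPD.posSemidef _
    have hNT : Nᵀ = N := herm_to_sym hNpsd.1
    -- R - N = RJR is PSD
    have hRJRpsd : (Rk * J * Rk).PosSemidef := by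
      have h1 : Rk * J * Rk = (Rk * Φᵀ) * S⁻¹ * (Rk * Φᵀ)ᵀ := by
        rw [Matrix.transpose_mul, Matrix.transpose_transpose, hRT, hJdef]
        simp only [Matrix.mul_assoc]
      rw [h1]
      exact psd_conj hSpd.inv.posSemidef _
    -- φ N = 0, Q N = 0, N Q = 0
    have hφN : Φ * N = 0 := by
      have h1 : Φ * N = Φ * Rk - (Φ * Rk * Φᵀ) * (S⁻¹ * (Φ * Rk)) := by
        rw [hNdef, Matrix.mul_sub, hJdef]; simp only [Matrix.mul_assoc]
      have h2 : (Φ * Rk * Φᵀ) * (S⁻¹ * (Φ * Rk)) = Φ * Rk := by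
        rw [← hSdef, ← Matrix.mul_assoc, hSSi, Matrix.one_mul]
      rw [h1, h2, sub_self]
    have hQN : Q * N = 0 := by
      rw [hQdef, Matrix.mul_assoc (Φᵀ * G⁻¹) Φ N, hφN, Matrix.mul_zero]
    have hNQ : N * Q = 0 := by
      have := congrArg Matrix.transpose hQN
      rwa [Matrix.transpose_mul, hNT, hQT, Matrix.transpose_zero] at this
    -- decomposition of R (k+1)
    have hdecomp : R (k + 1) = lam • Rk + (1 - lam) • N + Φᵀ * Φ := by
      rw [hrec k, ← hΦdef, ← hRkdef, ← hSdef]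
      have hassoc : Rk * Φᵀ * S⁻¹ * Φ * Rk = Rk * J * Rk := by
        rw [hJdef]; simp only [Matrix.mul_assoc]
      rw [hassoc, hNdef]
      ext i j
      simp only [Matrix.sub_apply, Matrix.add_apply, Matrix.smul_apply, smul_eq_mul]
      ring
    -- R (k+1) is PosDef
    have hPD' : (R (k + 1)).PosDef := by
      rw [hdecomp]
      have hφφ : (Φᵀ * Φ).PosSemidef := by
        have := Matrix.posSemidef_conjTranspose_mul_self Φ
        rwa [conjTranspose_eq_transpose_of_trivial] at this
      exact ((pd_smul hPD hl0).add_posSemidef (psd_smul hNpsd hμ.le)).add_posSemidef hφφ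
    refine ⟨hPD', ?_⟩
    -- the three PSD pieces
    have piece1 : (lam • (c • (1 : Matrix (Fin n) (Fin n) ℝ) - Rk)).PosSemidef :=
      psd_smul hPSD hl0.le
    have hc1N : (c • (1 : Matrix (Fin n) (Fin n) ℝ) - N).PosSemidef := by
      have heq : c • (1 : Matrix (Fin n) (Fin n) ℝ) - N
          = (c • 1 - Rk) + Rk * J * Rk := by
        rw [hNdef]; abel
      rw [heq]
      exact hPSD.add hRJRpsd
    have piece2 : ((1 - Q) * (c • (1 : Matrix (Fin n) (Fin n) ℝ) - N) * (1 - Q)ᵀ).PosSemidef :=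
      psd_conj hc1N _
    have piece2eq : (1 - Q) * (c • (1 : Matrix (Fin n) (Fin n) ℝ) - N) * (1 - Q)ᵀ
        = c • (1 : Matrix (Fin n) (Fin n) ℝ) - c • Q - N := by
      rw [Matrix.transpose_sub, Matrix.transpose_one, hQT]
      simp only [Matrix.sub_mul, Matrix.mul_sub, Matrix.mul_one, Matrix.one_mul,
        Matrix.smul_mul, Matrix.mul_smul, hQQ, hQN, hNQ, Matrix.mul_zero, Matrix.zero_mul,
        smul_zero, sub_zero, zero_sub]
      ext i j
      simp only [Matrix.sub_apply, Matrix.add_apply, Matrix.neg_apply, Matrix.smul_apply,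
        Matrix.zero_apply, smul_eq_mul]
      ring
    have hinner : (((1 - lam) * c) • (1 : Matrix (Fin n) (Fin n) ℝ) - Φᵀ * Φ).PosSemidef := by
      have heq : ((1 - lam) * c) • (1 : Matrix (Fin n) (Fin n) ℝ) - Φᵀ * Φ
          = ((1 - lam) * c - β) • (1 : Matrix (Fin n) (Fin n) ℝ) + (β • 1 - Φᵀ * Φ) := by
        rw [sub_smul]; abel
      rw [heq]
      exact (psd_smul Matrix.PosSemidef.one (by linarith)).add (hbdd k)
    have piece3 : (Q * (((1 - lam) * c) • (1 : Matrix (Fin n) (Fin n) ℝ) - Φᵀ * Φ) * Qᵀ).PosSemidef :=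
      psd_conj hinner _
    have piece3eq : Q * (((1 - lam) * c) • (1 : Matrix (Fin n) (Fin n) ℝ) - Φᵀ * Φ) * Qᵀ
        = ((1 - lam) * c) • Q - Φᵀ * Φ := by
      rw [hQT]
      have hQA : Q * (Φᵀ * Φ) = Φᵀ * Φ := by rw [← Matrix.mul_assoc, hQφt]
      have hAQ : Φᵀ * Φ * Q = Φᵀ * Φ := by rw [Matrix.mul_assoc, hφQ]
      simp only [Matrix.sub_mul, Matrix.mul_sub, Matrix.mul_one, Matrix.one_mul,
        Matrix.smul_mul, Matrix.mul_smul, hQQ, hQA, hAQ]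
    -- assemble
    have hfinal : c • (1 : Matrix (Fin n) (Fin n) ℝ) - R (k + 1)
        = lam • (c • (1 : Matrix (Fin n) (Fin n) ℝ) - Rk)
          + (1 - lam) • (c • (1 : Matrix (Fin n) (Fin n) ℝ) - c • Q - N)
          + (((1 - lam) * c) • Q - Φᵀ * Φ) := by
      rw [hdecomp]
      ext i j
      simp only [Matrix.sub_apply, Matrix.add_apply, Matrix.smul_apply, smul_eq_mul]
      ring
    rw [hfinal, ← piece2eq, ← piece3eq]
    exact ((piece1.add (psd_smul piece2 hμ.le)).add piece3)
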